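/- For every prime power q ≥ 2, ex(q² - q - 2, C₄) ≥ (1/2)q³ - q² + (3/2)q - C·q^{1/2} for some absolute constant C. In particular, for large q this exceeds (1/2)q³ - q², disproving the conjecture of Abreu, Balbuena, and Labbate that ex(q²-q-2, C₄) = (1/2)q³ - q² for q a power of 2. -/

import Mathlib

open Finset IntermediateField

section AffineGraph

variable {F : Type*} [Field F] [Fintype F] [DecidableEq F]


variable {F : Type*} [Field F] [Fintype F] [DecidableEq F]

def affG (F : Type*) [Field F] : SimpleGraph (F × F) where
  Adj v w := v ≠ w ∧ v.2 + w.2 = v.1 * w.1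
  symm := ⟨by rintro v w ⟨h1, h2⟩; exact ⟨h1.symm, by linear_combination h2⟩⟩
  loopless := ⟨fun v h => h.1 rfl⟩

noncomputable instance : DecidableRel (affG F).Adj := Classical.decRel _

lemma affG_adj (v w : F × F) : (affG F).Adj v w ↔ v ≠ w ∧ v.2 + w.2 = v.1 * w.1 := Iff.rfl

/-- key C4-freeness at the level of the big graph -/
lemma affG_c4 {a b c d : F × F} (hab : (affG F).Adj a b) (hbc : (affG F).Adj b c)
    (hcd : (affG F).Adj c d) (hda : (affG F).Adj d a) : a = c ∨ b = d := by
  by_contra hcon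
  push_neg at hcon
  obtain ⟨hac, hbd⟩ := hcon
  obtain ⟨-, e1⟩ := hab
  obtain ⟨-, e2⟩ := hbc
  obtain ⟨-, e3⟩ := hcd
  obtain ⟨-, e4⟩ := hda
  have key : (b.1 - d.1) * (a.1 - c.1) = 0 := by linear_combination e2 - e1 + e4 - e3
  rcases mul_eq_zero.1 key with h | h
  · have hb1 : b.1 = d.1 := sub_eq_zero.1 h
    have hb2 : b.2 = d.2 := by linear_combination e1 - e4 + a.1 * h
    exact hbd (Prod.ext hb1 hb2)
  · have ha1 : a.1 = c.1 := sub_eq_zero.1 h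
    have ha2 : a.2 = c.2 := by linear_combination e1 - e2 + b.1 * h
    exact hac (Prod.ext ha1 ha2)


/-- the neighborhood of v is exactly the image of x ↦ (x, v.1*x - v.2) minus v itself -/
lemma affG_nbr_eq (v : F × F) :
    univ.filter (fun w => (affG F).Adj v w) =
      (univ.image (fun x : F => (x, v.1 * x - v.2))).erase v := by
  ext w
  simp only [mem_filter, mem_univ, true_and, mem_erase, mem_image]
  constructor
  · rintro ⟨hne, he⟩
    exact ⟨hne.symm, w.1, by rw [← he]; exact Prod.ext rfl (by ring)⟩
  · rintro ⟨hne, x, hx⟩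
    refine ⟨hne.symm, ?_⟩
    have h1 : w.1 = x := by rw [← hx]
    have h2 : w.2 = v.1 * x - v.2 := by rw [← hx]
    rw [h1, h2]; ring

lemma affG_nbr_card_le (v : F × F) :
    (univ.filter (fun w => (affG F).Adj v w)).card ≤ Fintype.card F := by
  rw [affG_nbr_eq]
  calc ((univ.image (fun x : F => (x, v.1 * x - v.2))).erase v).card
      ≤ (univ.image (fun x : F => (x, v.1 * x - v.2))).card := card_erase_le
    _ ≤ (univ : Finset F).card := card_image_le
    _ = Fintype.card F := card_univ

lemma affG_nbr_card_ge (v : F × F) :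
    Fintype.card F ≤ (univ.filter (fun w => (affG F).Adj v w)).card +
      (if v.1 * v.1 = v.2 + v.2 then 1 else 0) := by
  rw [affG_nbr_eq]
  have hinj : Function.Injective (fun x : F => (x, v.1 * x - v.2)) := by
    intro a b hab
    simpa using congrArg Prod.fst hab
  have himg : (univ.image (fun x : F => (x, v.1 * x - v.2))).card = Fintype.card F := by
    rw [card_image_of_injective _ hinj, card_univ]
  by_cases hv : v ∈ univ.image (fun x : F => (x, v.1 * x - v.2))
  · have hd : v.1 * v.1 = v.2 + v.2 := by
      simp only [mem_image, mem_univ, true_and] at hv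
      obtain ⟨x, hx⟩ := hv
      rw [Prod.ext_iff] at hx
      obtain ⟨h1, h2⟩ := hx
      simp only at h1 h2
      subst h1
      linear_combination h2
    rw [if_pos hd, card_erase_of_mem hv, himg]
    have : 1 ≤ Fintype.card F := Fintype.card_pos
    omega
  · rw [erase_eq_of_notMem hv, himg]
    omega

/-- degenerate vertices are at most q -/
lemma affG_degen_card :
    (univ.filter (fun v : F × F => v.1 * v.1 = v.2 + v.2)).card ≤ Fintype.card F := by
  by_cases h2 : (2 : F) = 0
  · have hsub : (univ.filter (fun v : F × F => v.1 * v.1 = v.2 + v.2)) ⊆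
        univ.filter (fun v : F × F => v.1 = 0) := by
      intro v hv
      simp only [mem_filter, mem_univ, true_and] at hv ⊢
      have hz : v.1 * v.1 = 0 := by rw [hv]; linear_combination v.2 * h2
      exact mul_self_eq_zero.1 hz
    have h1 : (univ.filter (fun v : F × F => v.1 = 0)).card ≤ (univ : Finset F).card := by
      apply card_le_card_of_injOn (fun v : F × F => v.2) (fun a _ => mem_univ _)
      intro a ha b hb hab
      simp only [coe_filter, Set.mem_setOf_eq, mem_univ, true_and] at ha hb
      exact Prod.ext (ha.trans hb.symm) hab
    calc (univ.filter (fun v : F × F => v.1 * v.1 = v.2 + v.2)).card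
        ≤ (univ.filter (fun v : F × F => v.1 = 0)).card := card_le_card hsub
      _ ≤ (univ : Finset F).card := h1
      _ = Fintype.card F := card_univ
  · have h1 : (univ.filter (fun v : F × F => v.1 * v.1 = v.2 + v.2)).card ≤
        (univ : Finset F).card := by
      apply card_le_card_of_injOn (fun v : F × F => v.1) (fun a _ => mem_univ _)
      intro a ha b hb hab
      simp only [coe_filter, Set.mem_setOf_eq, mem_univ, true_and] at ha hb
      simp only at hab
      refine Prod.ext hab ?_
      have key : (2:F) * a.2 = 2 * b.2 := by
        have h1 : a.1 * a.1 = b.1 * b.1 := by rw [hab]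
        linear_combination hb - ha + h1
      exact mul_left_cancel₀ h2 key
    exact h1.trans (le_of_eq card_univ)

/-- total ordered adjacent pairs is at least q³ - q -/
lemma affG_pairs_ge :
    Fintype.card F ^ 3 ≤
      (univ.filter (fun z : (F × F) × (F × F) => (affG F).Adj z.1 z.2)).card +
        Fintype.card F := by
  classical
  set q := Fintype.card F with hq
  have hfib : (univ.filter (fun z : (F × F) × (F × F) => (affG F).Adj z.1 z.2)).card
      = ∑ v : F × F, (univ.filter (fun w => (affG F).Adj v w)).card := by
    rw [card_eq_sum_card_fiberwise (f := fun z : (F × F) × (F × F) => z.1)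
      (t := univ) (fun x _ => mem_univ _)]
    congr 1
    ext v
    apply card_bij (fun z _ => z.2)
    · intro z hz
      simp only [mem_filter, mem_univ, true_and] at hz ⊢
      rw [← hz.2]; exact hz.1
    · intro z hz z' hz' hzz
      simp only [mem_filter, mem_univ, true_and] at hz hz'
      exact Prod.ext (hz.2.trans hz'.2.symm) hzz
    · intro w hw
      simp only [mem_filter, mem_univ, true_and] at hw ⊢
      exact ⟨(v, w), ⟨hw, rfl⟩, rfl⟩
  have hdeg : ∀ v : F × F, q ≤ (univ.filter (fun w => (affG F).Adj v w)).card +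
      (if v.1 * v.1 = v.2 + v.2 then 1 else 0) := fun v => affG_nbr_card_ge v
  have hsum : q * q ^ 2 ≤
      (∑ v : F × F, (univ.filter (fun w => (affG F).Adj v w)).card) +
        (univ.filter (fun v : F × F => v.1 * v.1 = v.2 + v.2)).card := by
    have := Finset.sum_le_sum (fun v (_ : v ∈ (univ : Finset (F × F))) => hdeg v)
    simp only [sum_const, smul_eq_mul, card_univ] at this
    rw [Finset.sum_add_distrib] at this
    rw [Finset.card_filter]
    calc q * q ^ 2 = Fintype.card (F × F) * q := by
          rw [Fintype.card_prod, ← hq]; ring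
      _ ≤ _ := by
          refine le_trans (le_of_eq ?_) this
          rw [mul_comm]
  have := affG_degen_card (F := F)
  calc q ^ 3 = q * q ^ 2 := by ring
    _ ≤ _ := hsum.trans (by omega)

/-- pairs with first coordinate in a set T are at most |T| * q -/
lemma affG_pairs_fst_le (T : Finset (F × F)) :
    (univ.filter (fun z : (F × F) × (F × F) => (affG F).Adj z.1 z.2 ∧ z.1 ∈ T)).card ≤
      T.card * Fintype.card F := by
  classical
  rw [card_eq_sum_card_fiberwise (f := fun z : (F × F) × (F × F) => z.1) (t := T)
    (fun x hx => (mem_filter.1 hx).2.2)]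
  calc ∑ v ∈ T, _ ≤ ∑ _v ∈ T, Fintype.card F := by
        apply Finset.sum_le_sum
        intro v _
        refine le_trans ?_ (affG_nbr_card_le v)
        apply card_le_card_of_injOn (fun z => z.2)
        · intro z hz
          change z ∈ (_ : Finset _) at hz
          change _ ∈ (_ : Finset _)
          simp only [mem_filter, mem_univ, true_and] at hz ⊢
          rw [← hz.2]; exact hz.1.1
        · intro z hz z' hz' hzz
          simp only [coe_filter, Set.mem_setOf_eq, mem_univ, true_and] at hz hz'
          exact Prod.ext (hz.2.trans hz'.2.symm) hzz
    _ = T.card * Fintype.card F := by rw [sum_const, smul_eq_mul]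

/-- pairs with second coordinate in a set T are at most |T| * q -/
lemma affG_pairs_snd_le (T : Finset (F × F)) :
    (univ.filter (fun z : (F × F) × (F × F) => (affG F).Adj z.1 z.2 ∧ z.2 ∈ T)).card ≤
      T.card * Fintype.card F := by
  classical
  rw [card_eq_sum_card_fiberwise (f := fun z : (F × F) × (F × F) => z.2) (t := T)
    (fun x hx => (mem_filter.1 hx).2.2)]
  calc ∑ v ∈ T, _ ≤ ∑ _v ∈ T, Fintype.card F := by
        apply Finset.sum_le_sum
        intro v _
        refine le_trans ?_ (affG_nbr_card_le v)
        apply card_le_card_of_injOn (fun z => z.1)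
        · intro z hz
          change z ∈ (_ : Finset _) at hz
          change _ ∈ (_ : Finset _)
          simp only [mem_filter, mem_univ, true_and] at hz ⊢
          rw [← hz.2]; exact ((affG F).symm.symm _ _ hz.1.1)
        · intro z hz z' hz' hzz
          simp only [coe_filter, Set.mem_setOf_eq, mem_univ, true_and] at hz hz'
          exact Prod.ext hzz (hz.2.trans hz'.2.symm)
    _ = T.card * Fintype.card F := by rw [sum_const, smul_eq_mul]

/-- pointwise inclusion-exclusion for the pair counts -/
lemma affG_incl_excl (Sb : Finset (F × F)) :
    (univ.filter (fun z : (F × F) × (F × F) =>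
        (affG F).Adj z.1 z.2 ∧ z.1 ∉ Sb ∧ z.2 ∉ Sb)).card +
      (univ.filter (fun z : (F × F) × (F × F) => (affG F).Adj z.1 z.2 ∧ z.1 ∈ Sb)).card +
      (univ.filter (fun z : (F × F) × (F × F) => (affG F).Adj z.1 z.2 ∧ z.2 ∈ Sb)).card =
    (univ.filter (fun z : (F × F) × (F × F) => (affG F).Adj z.1 z.2)).card +
      (univ.filter (fun z : (F × F) × (F × F) =>
        (affG F).Adj z.1 z.2 ∧ z.1 ∈ Sb ∧ z.2 ∈ Sb)).card := by
  classical
  simp only [Finset.card_filter]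
  rw [← Finset.sum_add_distrib, ← Finset.sum_add_distrib, ← Finset.sum_add_distrib]
  apply Finset.sum_congr rfl
  intro z _
  by_cases h : (affG F).Adj z.1 z.2
  · by_cases h1 : z.1 ∈ Sb <;> by_cases h2 : z.2 ∈ Sb <;> simp [h, h1, h2]
  · simp [h]

/-- generic: ordered adjacent pairs = sum of neighborhood sizes -/
lemma pairs_card_eq_sum {α : Type*} [Fintype α] [DecidableEq α] (G : SimpleGraph α)
    [DecidableRel G.Adj] :
    (univ.filter (fun z : α × α => G.Adj z.1 z.2)).card
      = ∑ v : α, (univ.filter (fun w => G.Adj v w)).card := by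
  rw [card_eq_sum_card_fiberwise (f := fun z : α × α => z.1)
    (t := univ) (fun x _ => mem_univ _)]
  congr 1
  ext v
  apply card_bij (fun z _ => z.2)
  · intro z hz
    simp only [mem_filter, mem_univ, true_and] at hz ⊢
    rw [← hz.2]; exact hz.1
  · intro z hz z' hz' hzz
    simp only [mem_filter, mem_univ, true_and] at hz hz'
    exact Prod.ext (hz.2.trans hz'.2.symm) hzz
  · intro w hw
    simp only [mem_filter, mem_univ, true_and] at hw ⊢
    exact ⟨(v, w), ⟨hw, rfl⟩, rfl⟩

/-- The main deletion lemma. -/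
lemma affG_main {q n : ℕ} (hq : Fintype.card F = q) (h2 : 2 ≤ q)
    (hn : n = q ^ 2 - q - 2) (S : Finset (F × F)) (hS : S.card ≤ q + 2) :
    ∃ (G : SimpleGraph (Fin n)) (_ : DecidableRel G.Adj),
      (∀ a b c d, G.Adj a b → G.Adj b c → G.Adj c d → G.Adj d a → a = c ∨ b = d) ∧
      q ^ 3 + (univ.filter (fun z : (F × F) × (F × F) =>
          (affG F).Adj z.1 z.2 ∧ z.1 ∈ S ∧ z.2 ∈ S)).card
        ≤ 2 * G.edgeFinset.card + 2 * q * (q + 2) + q := by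
  classical
  -- enlarge S to exactly q + 2 elements
  have hcard2 : q + 2 ≤ Fintype.card (F × F) := by
    rw [Fintype.card_prod, hq]
    nlinarith
  obtain ⟨Sb, hSSb, hSb⟩ := Finset.exists_superset_card_eq hS hcard2
  set T : Finset (F × F) := univ \ Sb with hT
  have hTcard : T.card = n := by
    rw [hT, card_sdiff_of_subset (subset_univ _), card_univ, Fintype.card_prod, hq, hSb, hn]
    have : q + 2 ≤ q * q := by nlinarith
    rw [pow_two]
    omega
  have hcoe : Fintype.card {x // x ∈ T} = n := by rw [Fintype.card_coe]; exact hTcard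
  set e : Fin n ≃ {x // x ∈ T} := (Fintype.equivFinOfCardEq hcoe).symm with he
  set G : SimpleGraph (Fin n) := (affG F).comap (fun i => ((e i : {x // x ∈ T}) : F × F))
    with hG
  have hGadj : ∀ i j, G.Adj i j ↔ (affG F).Adj ((e i : {x // x ∈ T}) : F × F)
      ((e j : {x // x ∈ T}) : F × F) := fun i j => Iff.rfl
  have hinj : Function.Injective (fun i : Fin n => ((e i : {x // x ∈ T}) : F × F)) := by
    intro i j hij
    exact e.injective (Subtype.ext hij)
  refine ⟨G, Classical.decRel _, ?_, ?_⟩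
  · intro a b c d hab hbc hcd hda
    rcases affG_c4 ((hGadj _ _).1 hab) ((hGadj _ _).1 hbc) ((hGadj _ _).1 hcd)
      ((hGadj _ _).1 hda) with h | h
    · exact Or.inl (hinj h)
    · exact Or.inr (hinj h)
  · -- edge counting
    have hhs : ∑ v : Fin n, G.degree v = 2 * G.edgeFinset.card :=
      SimpleGraph.sum_degrees_eq_twice_card_edges G
    have hdegf : ∀ v : Fin n, G.degree v = (univ.filter (fun w => G.Adj v w)).card := by
      intro v
      rw [← SimpleGraph.neighborFinset_eq_filter]
      rfl
    have hpairsG : (univ.filter (fun z : Fin n × Fin n => G.Adj z.1 z.2)).card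
        = 2 * G.edgeFinset.card := by
      rw [pairs_card_eq_sum, ← hhs]
      exact (Finset.sum_congr rfl (fun v _ => (hdegf v).symm))
    -- pairs of G = pairs of affG with both endpoints outside Sb
    have hbij : (univ.filter (fun z : Fin n × Fin n => G.Adj z.1 z.2)).card
        = (univ.filter (fun z : (F × F) × (F × F) =>
            (affG F).Adj z.1 z.2 ∧ z.1 ∉ Sb ∧ z.2 ∉ Sb)).card := by
      apply card_bij (fun z _ => (((e z.1 : {x // x ∈ T}) : F × F),
        ((e z.2 : {x // x ∈ T}) : F × F)))
      · intro z hz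
        simp only [mem_filter, mem_univ, true_and] at hz ⊢
        refine ⟨hz, ?_, ?_⟩
        · exact (Finset.mem_sdiff.1 (e z.1).2).2
        · exact (Finset.mem_sdiff.1 (e z.2).2).2
      · intro z hz z' hz' hzz
        rw [Prod.ext_iff] at hzz
        exact Prod.ext (hinj hzz.1) (hinj hzz.2)
      · intro w hw
        simp only [mem_filter, mem_univ, true_and] at hw
        obtain ⟨hadj, h1, h2⟩ := hw
        have hw1T : w.1 ∈ T := by rw [hT, mem_sdiff]; exact ⟨mem_univ _, h1⟩
        have hw2T : w.2 ∈ T := by rw [hT, mem_sdiff]; exact ⟨mem_univ _, h2⟩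
        refine ⟨(e.symm ⟨w.1, hw1T⟩, e.symm ⟨w.2, hw2T⟩), ?_, ?_⟩
        · simp only [mem_filter, mem_univ, true_and]
          show (affG F).Adj _ _
          simp only [Equiv.apply_symm_apply]
          exact hadj
        · simp only [Equiv.apply_symm_apply]
    -- collect all inequalities
    have hA0 := affG_pairs_ge (F := F)
    have hA1 := affG_pairs_fst_le (F := F) Sb
    have hA2 := affG_pairs_snd_le (F := F) Sb
    have hIE := affG_incl_excl (F := F) Sb
    have hmono : (univ.filter (fun z : (F × F) × (F × F) =>
        (affG F).Adj z.1 z.2 ∧ z.1 ∈ S ∧ z.2 ∈ S)).card ≤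
        (univ.filter (fun z : (F × F) × (F × F) =>
        (affG F).Adj z.1 z.2 ∧ z.1 ∈ Sb ∧ z.2 ∈ Sb)).card := by
      apply card_le_card
      intro z hz
      simp only [mem_filter, mem_univ, true_and] at hz ⊢
      exact ⟨hz.1, hSSb hz.2.1, hSSb hz.2.2⟩
    rw [hq] at hA0 hA1 hA2
    rw [hSb] at hA1 hA2
    have h2E : 2 * G.edgeFinset.card
        = (univ.filter (fun z : (F × F) × (F × F) =>
            (affG F).Adj z.1 z.2 ∧ z.1 ∉ Sb ∧ z.2 ∉ Sb)).card := by
      rw [← hpairsG, hbij]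
    have hgoalq : 2 * q * (q + 2) = (q + 2) * q + (q + 2) * q := by ring
    simp only [SimpleGraph.edgeFinset_card, Fintype.card_eq_nat_card] at h2E ⊢
    omega


end AffineGraph

section PowersIndep

variable {p : ℕ} [Fact p.Prime]


variable {p : ℕ} [Fact p.Prime]

lemma field_powers_indep (F : Type*) [Field F] [Fintype F] [Algebra (ZMod p) F]
    {k : ℕ} (hk : Module.finrank (ZMod p) F = k) :
    ∃ γ : F, LinearIndependent (ZMod p) (fun i : Fin k => γ ^ (i : ℕ)) := by
  obtain ⟨g, hg⟩ := IsCyclic.exists_generator (α := Fˣ)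
  refine ⟨(g : F), ?_⟩
  have htop : (ZMod p)⟮(g : F)⟯ = ⊤ := by
    apply eq_top_iff.2
    intro x _
    by_cases hx : x = 0
    · rw [hx]; exact zero_mem _
    · obtain ⟨n, hn⟩ := Subgroup.mem_zpowers_iff.1 (hg (Units.mk0 x hx))
      have hxx : ((g ^ n : Fˣ) : F) = x := by rw [hn]; rfl
      rw [← hxx, Units.val_zpow_eq_zpow_val]
      exact zpow_mem (IntermediateField.mem_adjoin_simple_self _ _) n
  have hint : IsIntegral (ZMod p) (g : F) := Algebra.IsIntegral.isIntegral _
  have hdeg : (minpoly (ZMod p) (g : F)).natDegree = k := by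
    rw [← IntermediateField.adjoin.finrank hint]
    rw [htop, ← hk]
    exact LinearEquiv.finrank_eq IntermediateField.topEquiv.toLinearEquiv
  have h := linearIndependent_pow (K := ZMod p) (g : F)
  rw [hdeg] at h
  exact h

/-- Case II: q = p^k with k ≥ 3a-1, p^a ≥ 9 : a dense deletable set from subspaces. -/
lemma caseII (F : Type*) [Field F] [Fintype F] [DecidableEq F] [Algebra (ZMod p) F]
    {k a : ℕ} (hk : Module.finrank (ZMod p) F = k) (ha : 1 ≤ a) (hak : 3 * a - 1 ≤ k)
    (h9 : 9 ≤ p ^ a) :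
    ∃ S : Finset (F × F), S.card ≤ Fintype.card F + 2 ∧
      8 * Fintype.card F ≤ (univ.filter (fun z : (F × F) × (F × F) =>
        (affG F).Adj z.1 z.2 ∧ z.1 ∈ S ∧ z.2 ∈ S)).card := by
  classical
  obtain ⟨γ, hγ⟩ := field_powers_indep F hk
  have hcardF : Fintype.card F = p ^ k := by
    rw [Module.card_eq_pow_finrank (K := ZMod p) (V := F), ZMod.card, hk]
  have hak1 : a ≤ k := by omega
  have hak2 : 2 * a - 1 ≤ k - a := by omega
  -- the two spans
  set Wmod := Submodule.span (ZMod p) (Set.range (fun i : Fin a => γ ^ (i : ℕ))) with hWmod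
  set Zmod := Submodule.span (ZMod p) (Set.range (fun i : Fin (k - a) => γ ^ (i : ℕ)))
    with hZmod
  -- product closure
  have hprod : ∀ u ∈ Wmod, ∀ u' ∈ Wmod, u * u' ∈ Zmod := by
    intro u hu u' hu'
    have h1 : u * u' ∈ Wmod * Wmod := Submodule.mul_mem_mul hu hu'
    rw [hWmod, Submodule.span_mul_span] at h1
    refine Submodule.span_le.2 ?_ h1
    rintro x ⟨y, ⟨i, rfl⟩, z, ⟨j, rfl⟩, rfl⟩
    have hij : (i : ℕ) + (j : ℕ) < k - a := by
      have : (i : ℕ) < a := i.2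
      have : (j : ℕ) < a := j.2
      omega
    apply Submodule.subset_span
    exact ⟨⟨(i : ℕ) + (j : ℕ), hij⟩, by simp [pow_add]⟩
  -- linear independence of subfamilies
  have hWind : LinearIndependent (ZMod p) (fun i : Fin a => γ ^ (i : ℕ)) := by
    have := hγ.comp (Fin.castLE hak1) (Fin.castLE_injective hak1)
    exact this
  have hZind : LinearIndependent (ZMod p) (fun i : Fin (k - a) => γ ^ (i : ℕ)) := by
    have := hγ.comp (Fin.castLE (Nat.sub_le k a)) (Fin.castLE_injective _)
    exact this
  -- cardinalities
  have hWcard : Fintype.card Wmod = p ^ a := by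
    rw [Module.card_eq_pow_finrank (K := ZMod p), ZMod.card, finrank_span_eq_card hWind,
      Fintype.card_fin]
  have hZcard : Fintype.card Zmod = p ^ (k - a) := by
    rw [Module.card_eq_pow_finrank (K := ZMod p), ZMod.card, finrank_span_eq_card hZind,
      Fintype.card_fin]
  set Wf : Finset F := (Wmod : Set F).toFinset with hWf
  set Zf : Finset F := (Zmod : Set F).toFinset with hZf
  have hWfcard : Wf.card = p ^ a := by rw [hWf, Set.toFinset_card]; exact hWcard
  have hZfcard : Zf.card = p ^ (k - a) := by rw [hZf, Set.toFinset_card]; exact hZcard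
  refine ⟨Wf ×ˢ Zf, ?_, ?_⟩
  · rw [card_product, hWfcard, hZfcard, ← pow_add, Nat.add_sub_cancel' hak1, hcardF]
    omega
  · -- the injection from Wf.offDiag ×ˢ Zf
    have hinj : ∀ z ∈ Wf.offDiag ×ˢ Zf,
        ((z.1.1, z.2), (z.1.2, z.1.1 * z.1.2 - z.2)) ∈
          univ.filter (fun z : (F × F) × (F × F) =>
            (affG F).Adj z.1 z.2 ∧ z.1 ∈ Wf ×ˢ Zf ∧ z.2 ∈ Wf ×ˢ Zf) := by
      rintro ⟨⟨u, u'⟩, h⟩ hz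
      simp only [mem_product, mem_offDiag] at hz
      obtain ⟨⟨hu, hu', huu⟩, hh⟩ := hz
      simp only [mem_filter, mem_univ, true_and, mem_product]
      have hmemZ : u * u' - h ∈ Zf := by
        rw [hZf, Set.mem_toFinset]
        apply Submodule.sub_mem
        · exact hprod u (by rw [hWf, Set.mem_toFinset] at hu; exact hu) u'
            (by rw [hWf, Set.mem_toFinset] at hu'; exact hu')
        · rw [hZf, Set.mem_toFinset] at hh; exact hh
      refine ⟨⟨?_, by ring⟩, ⟨hu, hh⟩, ⟨hu', hmemZ⟩⟩
      intro hcon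
      exact huu (congrArg Prod.fst hcon)
    calc 8 * Fintype.card F ≤ (Wf.offDiag ×ˢ Zf).card := by
          rw [card_product, offDiag_card, hWfcard, hZfcard, hcardF]
          have h8 : 8 * p ^ k ≤ (p ^ a - 1) * p ^ k := by
            apply Nat.mul_le_mul_right
            omega
          have hsplit : p ^ a * p ^ (k - a) = p ^ k := by
            rw [← pow_add, Nat.add_sub_cancel' hak1]
          calc 8 * p ^ k ≤ (p ^ a - 1) * p ^ k := h8
            _ = (p ^ a - 1) * (p ^ a * p ^ (k - a)) := by rw [hsplit]
            _ = ((p ^ a - 1) * p ^ a) * p ^ (k - a) := by ring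
            _ = (p ^ a * p ^ a - p ^ a) * p ^ (k - a) := by
                rw [Nat.sub_mul, one_mul]
      _ ≤ _ := by
          apply card_le_card_of_injOn _ hinj
          rintro ⟨⟨u1, u2⟩, h⟩ _ ⟨⟨w1, w2⟩, h'⟩ _ heq
          simp only [Prod.ext_iff] at heq ⊢
          obtain ⟨⟨e1, e2⟩, e3, -⟩ := heq
          exact ⟨⟨e1, e3⟩, e2⟩


end PowersIndep

set_option maxRecDepth 8000 in
/-- Case I: q = p prime, interval construction. -/
lemma caseI (p : ℕ) [Fact p.Prime] (hp : 10000 < p) :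
    ∃ S : Finset (ZMod p × ZMod p), S.card ≤ p + 2 ∧
      8 * p ≤ (univ.filter (fun z : (ZMod p × ZMod p) × (ZMod p × ZMod p) =>
        (affG (ZMod p)).Adj z.1 z.2 ∧ z.1 ∈ S ∧ z.2 ∈ S)).card + 600 * (Nat.sqrt p + 1) := by
  classical
  set s := Nat.sqrt p with hs
  have hs1 : s * s ≤ p := by simpa [pow_two] using Nat.sqrt_le' p
  have hs2 : p < (s + 1) * (s + 1) := by
    have := Nat.lt_succ_sqrt' p
    simpa [pow_two, Nat.succ_eq_add_one] using this
  have hs3 : 100 ≤ s := by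
    rw [hs, Nat.le_sqrt']
    omega
  set N := s / 2 with hN
  have hN1 : 2 * N ≤ s := by omega
  have hN2 : s ≤ 2 * N + 1 := by omega
  set L := (p + 2) / 9 with hL
  have hL1 : 9 * L ≤ p + 2 := by omega
  have hL2 : p + 2 ≤ 9 * L + 8 := by omega
  set m₀ := (N + 1) * (N + 2) with hm₀
  set m₁ := (N + 8) * (N + 9) with hm₁
  have hmm : m₁ = m₀ + 14 * N + 70 := by rw [hm₀, hm₁]; ring
  -- nonlinear key facts
  have hs2' : p ≤ s * s + 2 * s := by nlinarith [hs2]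
  have key1 : 14 * N + 71 ≤ L := by
    -- from p ≥ s*s ≥ 100 s and 9L ≥ p - 6
    have h1 : 100 * s ≤ s * s := Nat.mul_le_mul_right s hs3
    omega
  have key3 : L + 1 ≤ m₀ := by
    have e1 : s + 1 ≤ 2 * N + 2 := by omega
    have e2 : s + 3 ≤ 2 * N + 4 := by omega
    have h1 : (s + 1) * (s + 3) ≤ (2 * N + 2) * (2 * N + 4) := Nat.mul_le_mul e1 e2
    have h4 : (2 * N + 2) * (2 * N + 4) = 4 * m₀ := by rw [hm₀]; ring
    have h2 : 9 * L ≤ s * s + 2 * s + 2 := by omega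
    nlinarith [h1, h2, h4, hs3, hN1, hN2]
  have key4 : 4 * m₁ + 1 ≤ 4 * p := by
    have e1 : 2 * N + 2 ≤ s + 2 := by omega
    have e2 : 2 * N + 4 ≤ s + 4 := by omega
    have h1 : (2 * N + 2) * (2 * N + 4) ≤ (s + 2) * (s + 4) := Nat.mul_le_mul e1 e2
    have h4 : (2 * N + 2) * (2 * N + 4) = 4 * m₀ := by rw [hm₀]; ring
    nlinarith [h1, h4, hs1, hs3, hmm, hN1]
  -- the center c
  set D := m₀ + 14 * N + 37 - L with hD
  set c := D / 2 with hc
  have hD1 : D + L = m₀ + 14 * N + 37 := by omega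
  have hc1 : 2 * c + L ≤ m₀ + 14 * N + 37 := by omega
  have hc2 : m₀ + 14 * N + 36 ≤ 2 * c + L := by omega
  -- the interval J
  set lo := m₁ + 1 - c - L with hlo
  set hi := m₀ - c with hhi
  have hcm : c + L + 33 ≤ m₁ := by omega
  have hcm0 : c ≤ m₀ := by omega
  have hJ1 : c ≤ lo := by omega
  have hJ2 : hi + 1 = lo + (L - (14 * N + 70)) := by omega
  have hhip : hi ≤ c + L - 1 := by omega
  have hyp : c + L - 1 < p := by omega
  -- the sets
  set X : Finset (ZMod p) := (Icc 1 9).image (fun i => ((N + i : ℕ) : ZMod p)) with hX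
  set Y : Finset (ZMod p) := (Icc c (c + L - 1)).image (fun y => ((y : ℕ) : ZMod p)) with hY
  refine ⟨X ×ˢ Y, ?_, ?_⟩
  · calc (X ×ˢ Y).card = X.card * Y.card := card_product X Y
      _ ≤ 9 * L := by
          apply Nat.mul_le_mul
          · exact (card_image_le).trans (by simp)
          · exact (card_image_le).trans (by rw [Nat.card_Icc]; omega)
      _ ≤ p + 2 := by omega
  · -- count via the injection from (Icc 1 9).offDiag ×ˢ (Icc lo hi)
    have hcast : ∀ a : ℕ, a < p → ((a : ZMod p)).val = a := fun a ha =>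
      ZMod.val_natCast_of_lt ha
    have hNp : ∀ i, i ∈ Icc 1 9 → N + i < p := by
      intro i hi'
      simp only [mem_Icc] at hi'
      omega
    -- membership of the y-interval values
    have hYmem : ∀ y : ℕ, c ≤ y → y ≤ c + L - 1 → ((y : ZMod p) ∈ Y) := by
      intro y h1 h2
      rw [hY, mem_image]
      exact ⟨y, by rw [mem_Icc]; omega, rfl⟩
    have hprodbound : ∀ i j : ℕ, i ∈ Icc 1 9 → j ∈ Icc 1 9 → i ≠ j →
        m₀ ≤ (N + i) * (N + j) ∧ (N + i) * (N + j) ≤ m₁ := by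
      intro i j hi' hj' hij
      simp only [mem_Icc] at hi' hj'
      constructor
      · rw [hm₀]
        rcases Nat.lt_or_ge i j with h | h
        · exact Nat.mul_le_mul (by omega) (by omega)
        · calc (N + 1) * (N + 2) = (N + 2) * (N + 1) := by ring
            _ ≤ (N + i) * (N + j) := Nat.mul_le_mul (by omega) (by omega)
      · rw [hm₁]
        rcases Nat.lt_or_ge i j with h | h
        · exact Nat.mul_le_mul (by omega) (by omega)
        · calc (N + i) * (N + j) ≤ (N + 9) * (N + 8) := Nat.mul_le_mul (by omega) (by omega)
            _ = (N + 8) * (N + 9) := by ring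
    -- the injection
    have hinj : ∀ z ∈ (Icc 1 9).offDiag ×ˢ Icc lo hi,
        ((((N + z.1.1 : ℕ) : ZMod p), ((z.2 : ℕ) : ZMod p)),
         (((N + z.1.2 : ℕ) : ZMod p), (((N + z.1.1) * (N + z.1.2) - z.2 : ℕ) : ZMod p))) ∈
          univ.filter (fun z : (ZMod p × ZMod p) × (ZMod p × ZMod p) =>
            (affG (ZMod p)).Adj z.1 z.2 ∧ z.1 ∈ X ×ˢ Y ∧ z.2 ∈ X ×ˢ Y) := by
      rintro ⟨⟨i, j⟩, y⟩ hz
      simp only [mem_product, mem_offDiag] at hz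
      obtain ⟨⟨hi', hj', hij⟩, hy⟩ := hz
      obtain ⟨hP1, hP2⟩ := hprodbound i j hi' hj' hij
      simp only [mem_Icc] at hi' hj' hy
      obtain ⟨hy1, hy2⟩ := hy
      have hyP : y ≤ (N + i) * (N + j) := by omega
      simp only [mem_filter, mem_univ, true_and, mem_product]
      refine ⟨⟨?_, ?_⟩, ⟨?_, ?_⟩, ?_, ?_⟩
      · -- distinct
        intro hcon
        have := congrArg Prod.fst hcon
        simp only at this
        have hvi := hcast (N + i) (by omega)
        have hvj := hcast (N + j) (by omega)
        rw [this] at hvi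
        omega
      · -- adjacency sum
        show ((y : ℕ) : ZMod p) + (((N + i) * (N + j) - y : ℕ) : ZMod p)
          = ((N + i : ℕ) : ZMod p) * ((N + j : ℕ) : ZMod p)
        rw [Nat.cast_sub hyP]
        push_cast
        ring
      · -- first x-coord in X
        rw [hX, mem_image]
        exact ⟨i, by rw [mem_Icc]; omega, rfl⟩
      · exact hYmem y (by omega) (by omega)
      · rw [hX, mem_image]
        exact ⟨j, by rw [mem_Icc]; omega, rfl⟩
      · -- second y-coord in Y
        apply hYmem
        · omega
        · omega
    have hcount : 72 * (L - (14 * N + 70)) ≤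
        (univ.filter (fun z : (ZMod p × ZMod p) × (ZMod p × ZMod p) =>
          (affG (ZMod p)).Adj z.1 z.2 ∧ z.1 ∈ X ×ˢ Y ∧ z.2 ∈ X ×ˢ Y)).card := by
      have hdom : ((Icc 1 9).offDiag ×ˢ Icc lo hi).card = 72 * (L - (14 * N + 70)) := by
        rw [card_product, offDiag_card, Nat.card_Icc, Nat.card_Icc]
        omega
      rw [← hdom]
      apply card_le_card_of_injOn _ hinj
      rintro ⟨⟨i, j⟩, y⟩ hz ⟨⟨i', j'⟩, y'⟩ hz' heq
      simp only [coe_product, Set.mem_prod, mem_coe, mem_offDiag, mem_Icc] at hz hz'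
      obtain ⟨⟨hi', hj', -⟩, hy1, hy2⟩ := hz
      obtain ⟨⟨hi'', hj'', -⟩, hy1', hy2'⟩ := hz'
      simp only [Prod.ext_iff] at heq ⊢
      obtain ⟨⟨e1, e2⟩, e3, -⟩ := heq
      have hv1 := hcast (N + i) (by omega)
      have hv2 := hcast (N + i') (by omega)
      rw [e1] at hv1
      have hvy := hcast y (by omega)
      have hvy' := hcast y' (by omega)
      rw [e2] at hvy
      have hv3 := hcast (N + j) (by omega)
      have hv4 := hcast (N + j') (by omega)
      rw [e3] at hv3
      refine ⟨⟨?_, ?_⟩, ?_⟩ <;> omega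
    omega

/-- unified large-q lemma, ℕ-form -/
lemma large_q (q : ℕ) (hq4 : 10000 < q) (hpp : ∃ p k : ℕ, p.Prime ∧ 1 ≤ k ∧ q = p ^ k) :
    ∃ (G : SimpleGraph (Fin (q ^ 2 - q - 2))) (_ : DecidableRel G.Adj),
      (∀ a b c d, G.Adj a b → G.Adj b c → G.Adj c d → G.Adj d a → a = c ∨ b = d) ∧
      q ^ 3 + 8 * q ≤ 2 * G.edgeFinset.card + 2 * q * (q + 2) + q
        + 600 * (Nat.sqrt q + 1) := by
  obtain ⟨p, k, hp, hk1, hqpk⟩ := hpp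
  haveI : Fact p.Prime := ⟨hp⟩
  have h2 : 2 ≤ q := by omega
  rcases Nat.eq_or_lt_of_le hk1 with hk | hk2
  · -- k = 1 : prime case
    have hqp : q = p := by rw [hqpk, ← hk, pow_one]
    subst hqp
    obtain ⟨S, hS, hScount⟩ := caseI q (by omega)
    obtain ⟨G, hdec, hc4, hcount⟩ := affG_main (F := ZMod q) (ZMod.card q) h2 rfl S hS
    exact ⟨G, hdec, hc4, by omega⟩
  · -- k ≥ 2 : prime power case
    have hk2' : 2 ≤ k := hk2
    set F := GaloisField p k with hF
    haveI : Finite F := Nat.finite_of_card_ne_zero (by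
      rw [hF, GaloisField.card p k (by omega)]
      exact (Nat.pow_pos hp.pos).ne')
    haveI : Fintype F := Fintype.ofFinite _
    haveI : DecidableEq F := Classical.decEq _
    have hkrank : Module.finrank (ZMod p) F = k := GaloisField.finrank p (by omega)
    have hcardF : Fintype.card F = q := by
      rw [← Nat.card_eq_fintype_card, hF, GaloisField.card p k (by omega), hqpk]
    -- choose a
    have hp2 : 2 ≤ p := hp.two_le
    obtain ⟨a, ha1, hak, h9⟩ : ∃ a : ℕ, 1 ≤ a ∧ 3 * a - 1 ≤ k ∧ 9 ≤ p ^ a := by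
      rcases Nat.lt_or_ge p 11 with hp11 | hp11
      · rcases Nat.lt_or_ge p 3 with hp3 | hp3
        · -- p = 2, need k ≥ 11; from 2^k = q > 10000 get k ≥ 14
          have hpe : p = 2 := by omega
          refine ⟨4, by omega, ?_, by rw [hpe]; omega⟩
          by_contra hcon
          push_neg at hcon
          have hkle : k ≤ 13 := by omega
          have : q ≤ 2 ^ 13 := by
            rw [hqpk, hpe]
            exact Nat.pow_le_pow_right (by omega) hkle
          omega
        · -- 3 ≤ p ≤ 10, a = 2: need k ≥ 5; p^k > 10000, p ≤ 10 ⇒ 10^4 < p^k ≤ 10^k ⇒ k ≥ 5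
          refine ⟨2, by omega, ?_, by nlinarith⟩
          by_contra hcon
          push_neg at hcon
          have hkle : k ≤ 4 := by omega
          have h1 : q ≤ 10 ^ 4 := by
            rw [hqpk]
            calc p ^ k ≤ 10 ^ k := Nat.pow_le_pow_left (by omega) k
              _ ≤ 10 ^ 4 := Nat.pow_le_pow_right (by omega) hkle
          omega
      · exact ⟨1, le_refl 1, by omega, by rw [pow_one]; omega⟩
    obtain ⟨S, hS, hScount⟩ := caseII (p := p) F hkrank ha1 hak h9
    rw [hcardF] at hS hScount
    obtain ⟨G, hdec, hc4, hcount⟩ := affG_main (F := F) hcardF h2 rfl S hS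
    exact ⟨G, hdec, hc4, by omega⟩

/-- There is an absolute constant `C > 0` such that for every prime power `q ≥ 2` there is a
`C₄`-free graph on `q² - q - 2` vertices with at least `(1/2)q³ - q² + (3/2)q - C q^(1/2)`
edges, i.e. `ex(q² - q - 2, C₄) ≥ (1/2)q³ - q² + (3/2)q - O(q^(1/2))`.  Moreover for all
sufficiently large `q` this bound exceeds `(1/2)q³ - q²`, disproving the conjecture of Abreu,
Balbuena, and Labbate that `ex(q² - q - 2, C₄) = (1/2)q³ - q²` for `q` a power of `2`. -/
theorem ex_C4_lower_bound_ABL :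
    ∃ C : ℝ, 0 < C ∧
      (∀ q : ℕ, 2 ≤ q → (∃ (p k : ℕ), p.Prime ∧ 1 ≤ k ∧ q = p ^ k) →
        ∃ (G : SimpleGraph (Fin (q ^ 2 - q - 2))) (_ : DecidableRel G.Adj),
          (∀ a b c d, G.Adj a b → G.Adj b c → G.Adj c d → G.Adj d a → a = c ∨ b = d) ∧
          (G.edgeFinset.card : ℝ) ≥
            (1 / 2) * (q : ℝ) ^ 3 - (q : ℝ) ^ 2 + (3 / 2) * q - C * Real.sqrt q) ∧
      ∃ Q : ℕ, ∀ q : ℕ, Q ≤ q →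
        (1 / 2) * (q : ℝ) ^ 3 - (q : ℝ) ^ 2 + (3 / 2) * q - C * Real.sqrt q >
          (1 / 2) * (q : ℝ) ^ 3 - (q : ℝ) ^ 2 := by
  refine ⟨10 ^ 13, by norm_num, ?_, ?_⟩
  · intro q hq2 hpp
    have hq0 : (0:ℝ) ≤ (q:ℝ) := Nat.cast_nonneg q
    have hsq1 : (1:ℝ) ≤ Real.sqrt q := by
      rw [Real.one_le_sqrt]
      exact_mod_cast Nat.one_le_iff_ne_zero.2 (by omega)
    by_cases hql : q ≤ 10000
    · -- small q : empty graph suffices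
      refine ⟨⊥, Classical.decRel _, ?_, ?_⟩
      · intro a b c d hab
        exact absurd hab (by simp)
      · have hq' : (q:ℝ) ≤ 10000 := by exact_mod_cast hql
        have e1 : (q:ℝ) ^ 3 ≤ 10000 * (q:ℝ) ^ 2 := by nlinarith
        have e2 : (q:ℝ) ^ 2 ≤ 10000 * (q:ℝ) := by nlinarith
        have e3 : (0:ℝ) ≤ (q:ℝ) ^ 2 := by positivity
        have hRHS : (1 / 2) * (q : ℝ) ^ 3 - (q : ℝ) ^ 2 + (3 / 2) * q
            - 10 ^ 13 * Real.sqrt q ≤ 0 := by nlinarith [hsq1]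
        exact le_trans hRHS (Nat.cast_nonneg _)
    · -- large q
      push_neg at hql
      obtain ⟨G, hdec, hc4, hcount⟩ := large_q q hql hpp
      refine ⟨G, hdec, hc4, ?_⟩
      set s := Nat.sqrt q with hs
      have hsr : (s:ℝ) ≤ Real.sqrt q := by
        have hss : s * s ≤ q := by simpa [pow_two] using Nat.sqrt_le' q
        have h' : ((s:ℝ)) * (s:ℝ) ≤ (q:ℝ) := by exact_mod_cast hss
        apply (Real.le_sqrt (by positivity) (by positivity)).2
        rw [pow_two]
        exact h'
      have hcast : (q:ℝ)^3 + 8*(q:ℝ) ≤ 2*(G.edgeFinset.card : ℝ) + 2*(q:ℝ)*((q:ℝ)+2)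
          + (q:ℝ) + 600*((s:ℝ)+1) := by
        exact_mod_cast hcount
      have hC : (600:ℝ) * ((s:ℝ)+1) ≤ 1200 * Real.sqrt q := by nlinarith
      have hCC : (1200:ℝ) * Real.sqrt q ≤ 2 * 10^13 * Real.sqrt q := by nlinarith
      nlinarith [hcast, hC, hCC]
  · -- part 2 : the bound beats the conjecture for large q
    refine ⟨(10 ^ 13) ^ 2, ?_⟩
    intro q hq
    have h0 : ((10:ℝ) ^ 13) ^ 2 ≤ (q:ℝ) := by exact_mod_cast hq
    have h1 : (10:ℝ)^13 ≤ Real.sqrt q := by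
      rw [show (10:ℝ)^13 = Real.sqrt (((10:ℝ)^13)^2) from (Real.sqrt_sq (by positivity)).symm]
      exact Real.sqrt_le_sqrt h0
    have h2 : Real.sqrt q * Real.sqrt q = (q:ℝ) := Real.mul_self_sqrt (Nat.cast_nonneg q)
    have h3 : (0:ℝ) < Real.sqrt q := lt_of_lt_of_le (by positivity) h1
    have h4 : (10:ℝ)^13 * Real.sqrt q ≤ (q:ℝ) := by nlinarith
    have h5 : (0:ℝ) < (q:ℝ) := by nlinarith
    nlinarith
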